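/- Let n ≥ 2 and let F ⊆ ℝ^{2n+1} be the set of 0/1 vectors (A, y, B) with A, y ∈ {0,1}^n, B ∈ {0,1} satisfying B ≥ A_j − (1 − y_j) for every j ∈ {1,…,n} and B ≤ ∑_{k∈S} A_k + (1 − y_j) + ∑_{k∉S} y_k for every nonempty S ⊆ {1,…,n} and every j ∈ S. Then for each fixed index j ∈ {1,…,n} there exist 2n+1 affinely independent points of F that satisfy the inequality B ≥ A_j − (1 − y_j) with equality, i.e. B = A_j − (1 − y_j). Consequently this inequality defines a facet of the convex hull of F. -/
import Mathlib

open Finset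

private def tofQ (n : ℕ) (j : Fin n) :
    (Fin n ⊕ Fin n) ⊕ Fin 1 → (Fin n → ℝ) × (Fin n → ℝ) × ℝ
  | .inl (.inl k) => (fun _ => 0, fun i => if i = k ∨ i = j then 1 else 0, 0)
  | .inl (.inr k) => (fun i => if i = k then 1 else 0,
                      fun i => if i = j ∧ ¬ k = j then 1 else 0, 0)
  | .inr _ => (fun i => if i = j then 1 else 0, fun _ => 1, 1)

private lemma tofQ_affineIndependent (n : ℕ) (j : Fin n) :
    AffineIndependent ℝ (tofQ n j) := by
  classical
  rw [affineIndependent_iff]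
  intro s w hw0 hw1 i hi
  -- extend the weights by zero
  set W : ((Fin n ⊕ Fin n) ⊕ Fin 1) → ℝ := fun i => if i ∈ s then w i else 0 with hW
  have hWs : ∀ i, W i • tofQ n j i = if i ∈ s then w i • tofQ n j i else 0 := by
    intro i; simp [hW, ite_smul]
  have h0 : ∑ i, W i = 0 := by
    rw [Finset.sum_ite_mem, Finset.univ_inter]; exact hw0
  have h1 : ∑ i, W i • tofQ n j i = 0 := by
    rw [Finset.sum_congr rfl fun i _ => hWs i, Finset.sum_ite_mem, Finset.univ_inter]
    exact hw1
  -- B coordinate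
  have hc : W (.inr 0) = 0 := by
    have := congrArg (fun v : (Fin n → ℝ) × (Fin n → ℝ) × ℝ => v.2.2) h1
    simpa [tofQ, Fintype.sum_sum_type, Prod.snd_sum, smul_eq_mul] using this
  -- A coordinates
  have hb : ∀ i, W (.inl (.inr i)) = 0 := by
    intro i
    have := congrArg (fun v : (Fin n → ℝ) × (Fin n → ℝ) × ℝ => v.1 i) h1
    simp [tofQ, Fintype.sum_sum_type, Prod.fst_sum, smul_eq_mul, Finset.sum_apply,
      mul_ite, Finset.sum_ite_eq, hc] at this
    exact this
  -- y coordinates, off-diagonal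
  have ha : ∀ i, ¬ i = j → W (.inl (.inl i)) = 0 := by
    intro i hij
    have := congrArg (fun v : (Fin n → ℝ) × (Fin n → ℝ) × ℝ => v.2.1 i) h1
    simp [tofQ, Fintype.sum_sum_type, Prod.fst_sum, Prod.snd_sum, smul_eq_mul,
      Finset.sum_apply, mul_ite, hij, Finset.sum_ite_eq, hc, hb] at this
    exact this
  have haj : W (.inl (.inl j)) = 0 := by
    have hs : ∑ k, W (.inl (.inl k)) = W (.inl (.inl j)) :=
      Finset.sum_eq_single_of_mem j (Finset.mem_univ j) fun k _ hk => ha k hk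
    have := h0
    rw [Fintype.sum_sum_type, Fintype.sum_sum_type, Fin.sum_univ_one] at this
    simp [hs, hb, hc] at this
    exact this
  have hall : ∀ i, W i = 0 := by
    rintro (⟨k | k⟩ | x)
    · by_cases hk : k = j
      · subst hk; exact haj
      · exact ha k hk
    · exact hb k
    · have : x = 0 := Subsingleton.elim x 0
      subst this; exact hc
  have := hall i
  simpa [hW, hi] using this

/-- Facet property of the inequalities `B ≥ A_j − (1 − y_j)`: for each `j`,
the feasible 0/1 set `F` of a single relaxed equivalence clause contains
`2n+1` affinely independent points satisfying `B = A_j − (1 − y_j)`. -/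
theorem type_one_inequality_facet (n : ℕ) (hn : 2 ≤ n) (j : Fin n) :
    let F : Set ((Fin n → ℝ) × (Fin n → ℝ) × ℝ) :=
      {p | (∀ i, p.1 i = 0 ∨ p.1 i = 1) ∧ (∀ i, p.2.1 i = 0 ∨ p.2.1 i = 1) ∧
           (p.2.2 = 0 ∨ p.2.2 = 1) ∧
           (∀ i, p.1 i - (1 - p.2.1 i) ≤ p.2.2) ∧
           (∀ S : Finset (Fin n), S.Nonempty → ∀ i ∈ S,
             p.2.2 ≤ (∑ k ∈ S, p.1 k) + (1 - p.2.1 i) + ∑ k ∈ Sᶜ, p.2.1 k)}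
    ∃ p : Fin (2 * n + 1) → (Fin n → ℝ) × (Fin n → ℝ) × ℝ,
      (∀ i, p i ∈ F) ∧ AffineIndependent ℝ p ∧
      ∀ i, (p i).2.2 = (p i).1 j - (1 - (p i).2.1 j) := by
  intro F
  classical
  have e : Fin (2*n+1) ≃ (Fin n ⊕ Fin n) ⊕ Fin 1 :=
    (finCongr (by ring : 2*n+1 = (n+n)+1)).trans
      ((finSumFinEquiv (m := n+n) (n := 1)).symm.trans
        ((finSumFinEquiv (m := n) (n := n)).symm.sumCongr (Equiv.refl (Fin 1))))
  refine ⟨tofQ n j ∘ e, ?_, ?_, ?_⟩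
  · intro i
    show tofQ n j (e i) ∈ F
    generalize e i = x
    rcases x with (⟨k | k⟩ | x) <;>
      simp only [F, tofQ, Set.mem_setOf_eq]
    · refine ⟨fun i => by norm_num, fun i => by split_ifs <;> simp, by norm_num, ?_, ?_⟩
      · intro i; split_ifs <;> norm_num
      · intro S _ i _
        have h1 : (0:ℝ) ≤ ∑ k ∈ S, (0:ℝ) := by simp
        have h2 : (0:ℝ) ≤ 1 - (if i = k ∨ i = j then (1:ℝ) else 0) := by
          split_ifs <;> norm_num
        have h3 : (0:ℝ) ≤ ∑ m ∈ Sᶜ, (if m = k ∨ m = j then (1:ℝ) else 0) :=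
          Finset.sum_nonneg fun m _ => by split_ifs <;> norm_num
        linarith
    · refine ⟨fun i => by split_ifs <;> simp, fun i => by split_ifs <;> simp,
        by norm_num, ?_, ?_⟩
      · intro i
        split_ifs with h1 h2
        · exact absurd (h1.symm.trans h2.1) h2.2
        all_goals norm_num
      · intro S _ i _
        have h1 : (0:ℝ) ≤ ∑ m ∈ S, (if m = k then (1:ℝ) else 0) :=
          Finset.sum_nonneg fun m _ => by split_ifs <;> norm_num
        have h2 : (0:ℝ) ≤ 1 - (if i = j ∧ ¬ k = j then (1:ℝ) else 0) := by
          split_ifs <;> norm_num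
        have h3 : (0:ℝ) ≤ ∑ m ∈ Sᶜ, (if m = j ∧ ¬ k = j then (1:ℝ) else 0) :=
          Finset.sum_nonneg fun m _ => by split_ifs <;> norm_num
        linarith
    · refine ⟨fun i => by split_ifs <;> simp, fun i => by norm_num, by norm_num, ?_, ?_⟩
      · intro i; split_ifs <;> norm_num
      · intro S hS i _
        have hcard : ∑ m ∈ Sᶜ, (1:ℝ) = (Sᶜ.card : ℝ) := by simp
        by_cases hj : j ∈ S
        · have h1 : ∑ m ∈ S, (if m = j then (1:ℝ) else 0) = 1 := by
            rw [Finset.sum_ite_eq' S j (fun _ => (1:ℝ))]; simp [hj]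
          have h3 : (0:ℝ) ≤ (Sᶜ.card : ℝ) := by positivity
          rw [h1, hcard]; linarith
        · have h1 : ∑ m ∈ S, (if m = j then (1:ℝ) else 0) = 0 := by
            rw [Finset.sum_ite_eq' S j (fun _ => (1:ℝ))]; simp [hj]
          have h3 : (1:ℝ) ≤ (Sᶜ.card : ℝ) := by
            have : 0 < Sᶜ.card := Finset.card_pos.mpr ⟨j, by simpa using hj⟩
            exact_mod_cast this
          rw [h1, hcard]; linarith
  · exact (tofQ_affineIndependent n j).comp_embedding e.toEmbedding
  · intro i
    show (tofQ n j (e i)).2.2 = (tofQ n j (e i)).1 j - (1 - (tofQ n j (e i)).2.1 j)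
    rcases e i with (⟨k | k⟩ | x)
    · simp [tofQ]
    · by_cases hk : k = j
      · simp [tofQ, hk]
      · simp [tofQ, hk, Ne.symm hk]
    · simp [tofQ]
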